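/- Let R be a commutative Noetherian ring and 𝒜 the ring obtained from R[T,T⁻¹] by inverting all special monic polynomials of R[T] (monic polynomials f with f(0) = 1). Then dim(𝒜) ≤ dim(R). -/

import Mathlib

open Polynomial

section ArtinianHelpers

variable {R M : Type*}

lemma my_isArtinian_of_isSimpleModule [Ring R] [AddCommGroup M] [Module R M]
    [IsSimpleModule R M] : IsArtinian R M := by
  rw [isArtinian_iff]
  constructor
  intro N
  constructor
  intro N' h'
  rcases eq_bot_or_eq_top N' with rfl | rfl
  · constructor
    intro c hc
    exact absurd hc (not_lt_bot)
  · exact absurd h' (not_top_lt)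

lemma my_isArtinian_of_killed [CommRing R] [AddCommGroup M] [Module R M]
    (m : Ideal R) (hm : m.IsMaximal) [Module.Finite R M]
    (hann : ∀ (x : M), ∀ a ∈ m, a • x = 0) : IsArtinian R M := by
  obtain ⟨s, hs⟩ := Module.Finite.fg_top (R := R) (M := M)
  have key : ∀ x : M, IsArtinian R (Submodule.span R {x}) := by
    intro x
    have hle : m ≤ Ideal.torsionOf R M x := fun a ha => by
      rw [Ideal.mem_torsionOf_iff]; exact hann x a ha
    by_cases hx : (1 : R) ∈ Ideal.torsionOf R M x
    · have : x = 0 := by simpa [Ideal.mem_torsionOf_iff] using hx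
      subst this
      rw [Submodule.span_zero_singleton]
      exact isArtinian_of_finite
    · have heq : Ideal.torsionOf R M x = m :=
        (hm.eq_of_le (fun h => hx (by rw [h]; trivial)) hle).symm
      have : IsSimpleModule R (R ⧸ Ideal.torsionOf R M x) := by
        rw [heq]
        rw [isSimpleModule_iff_isCoatom]
        exact hm.out
      have := my_isArtinian_of_isSimpleModule (R := R) (M := R ⧸ Ideal.torsionOf R M x)
      exact isArtinian_of_linearEquiv (Ideal.quotTorsionOfEquivSpanSingleton R M x)
  classical
  have main : ∀ t : Finset M, IsArtinian R (Submodule.span R (t : Set M)) := by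
    intro t
    induction t using Finset.induction_on with
    | empty =>
        have h0 : IsArtinian R (⊥ : Submodule R M) := isArtinian_of_finite
        rw [Finset.coe_empty, Submodule.span_empty]
        exact h0
    | @insert a t' hx ih =>
        rw [Finset.coe_insert, Submodule.span_insert]
        haveI := key a
        haveI := ih
        exact isArtinian_sup _ _
  have := main s
  rw [hs] at this
  exact isArtinian_of_linearEquiv (Submodule.topEquiv)

lemma my_isArtinian_of_pow_smul_eq_bot [CommRing R] [IsNoetherianRing R]
    (m : Ideal R) (hm : m.IsMaximal) :
    ∀ (k : ℕ) (M : Type*) [AddCommGroup M] [Module R M] [Module.Finite R M],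
      (m ^ k • (⊤ : Submodule R M) = ⊥) → IsArtinian R M := by
  intro k
  induction k with
  | zero =>
      intro M _ _ _ h
      rw [pow_zero, Ideal.one_eq_top, Submodule.top_smul] at h
      haveI : Subsingleton M := by
        constructor
        intro a b
        have ha : a ∈ (⊤ : Submodule R M) := Submodule.mem_top
        have hb : b ∈ (⊤ : Submodule R M) := Submodule.mem_top
        rw [h] at ha hb
        simp only [Submodule.mem_bot] at ha hb
        rw [ha, hb]
      exact isArtinian_of_finite
  | succ k ih =>
      intro M _ _ _ h
      set S : Submodule R M := m • ⊤ with hS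
      haveI : IsNoetherian R M := isNoetherian_of_isNoetherianRing_of_finite R M
      haveI hfgS : Module.Finite R S := by
        rw [Module.Finite.iff_fg]
        exact IsNoetherian.noetherian S
      haveI hartS : IsArtinian R S := by
        apply ih S
        have hinj := Submodule.injective_subtype S
        apply Submodule.map_injective_of_injective hinj
        rw [Submodule.map_smul'', Submodule.map_bot]
        have : Submodule.map S.subtype ⊤ = S := by
          rw [Submodule.map_top, Submodule.range_subtype]
        rw [this, hS, smul_smul, ← pow_succ]
        exact h
      haveI hartQ : IsArtinian R (M ⧸ S) := by
        apply my_isArtinian_of_killed m hm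
        intro x a ha
        obtain ⟨y, rfl⟩ := Submodule.Quotient.mk_surjective S x
        rw [← Submodule.Quotient.mk_smul, Submodule.Quotient.mk_eq_zero]
        exact Submodule.smul_mem_smul ha Submodule.mem_top
      exact (isArtinian_iff_submodule_quotient S).mpr ⟨hartS, hartQ⟩

lemma my_isArtinianRing_of_pow_eq_bot {R : Type*} [CommRing R] [IsNoetherianRing R]
    (m : Ideal R) (hm : m.IsMaximal) (N : ℕ) (h : m ^ N = ⊥) : IsArtinianRing R := by
  apply my_isArtinian_of_pow_smul_eq_bot m hm N R
  rw [Ideal.smul_eq_mul, Ideal.mul_top]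
  exact h

end ArtinianHelpers

section PIT

open Ideal

set_option maxHeartbeats 1000000 in
set_option synthInstance.maxHeartbeats 400000 in
/-- Krull's principal ideal theorem, in the form: below a prime minimal over a
principal ideal there is no chain of two strict inclusions of primes. -/
theorem my_pit {A : Type*} [CommRing A] [IsNoetherianRing A] {a : A} {P : Ideal A}
    (hP : P ∈ (Ideal.span {a}).minimalPrimes) {q q' : Ideal A}
    (hq : q.IsPrime) (hq' : q'.IsPrime) (h1 : q < q') (h2 : q' < P) : False := by
  haveI hPp : P.IsPrime := hP.1.1
  -- a ∉ q'
  have haq' : a ∉ q' := by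
    intro ha
    have : P ≤ q' := hP.2 ⟨hq', by rwa [Ideal.span_le, Set.singleton_subset_iff]⟩ h2.le
    exact absurd this (not_le_of_gt h2)
  set B := Localization.AtPrime P with hB
  set φ := algebraMap A B with hφ
  haveI hNB : IsNoetherianRing B :=
    IsLocalization.isNoetherianRing P.primeCompl B inferInstance
  have hdisj : ∀ (r : Ideal A), r ≤ P → Disjoint (P.primeCompl : Set A) (r : Set A) :=
    fun r hr => Set.disjoint_left.mpr (fun x hx hxr => hx (hr hxr))
  set Q' : Ideal B := q'.map φ with hQ'
  set Qq : Ideal B := q.map φ with hQq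
  haveI hQ'p : Q'.IsPrime :=
    IsLocalization.isPrime_of_isPrime_disjoint P.primeCompl B q' hq' (hdisj q' h2.le)
  haveI hQqp : Qq.IsPrime :=
    IsLocalization.isPrime_of_isPrime_disjoint P.primeCompl B q hq
      (hdisj q (h1.le.trans h2.le))
  have hcomapQ' : Q'.comap φ = q' :=
    IsLocalization.comap_map_of_isPrime_disjoint P.primeCompl B hq' (hdisj q' h2.le)
  have hcomapQq : Qq.comap φ = q :=
    IsLocalization.comap_map_of_isPrime_disjoint P.primeCompl B hq
      (hdisj q (h1.le.trans h2.le))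
  set m : Ideal B := P.map φ with hm
  have hmmax : m = IsLocalRing.maximalIdeal B := Localization.AtPrime.map_eq_maximalIdeal
  have hphia_m : φ a ∈ m := Ideal.mem_map_of_mem φ (hP.1.2 (Ideal.mem_span_singleton_self a))
  -- every prime of B containing φ a equals m
  have hunique : ∀ (Θ : Ideal B), Θ.IsPrime → φ a ∈ Θ → Θ = m := by
    intro Θ hΘ ha
    have hcom : (Θ.comap φ).IsPrime := hΘ.comap φ
    have hle : Θ.comap φ ≤ P := by
      have := (IsLocalization.isPrime_iff_isPrime_disjoint P.primeCompl B Θ).mp hΘ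
      intro x hx
      by_contra hxP
      exact Set.disjoint_left.mp this.2 hxP hx
    have hge : P ≤ Θ.comap φ := hP.2 ⟨hcom, by
      rw [Ideal.span_le, Set.singleton_subset_iff]
      exact ha⟩ hle
    have : Θ.comap φ = P := le_antisymm hle hge
    rw [← IsLocalization.map_comap P.primeCompl B Θ]
    exact (congrArg (Ideal.map φ) this).trans hm.symm
  -- the quotient B ⧸ (φ a) has m as unique prime
  set I : Ideal B := Ideal.span {φ a} with hI
  set Bq := B ⧸ I with hBq
  set π := Ideal.Quotient.mk I with hπ
  have hπsurj : Function.Surjective π := Ideal.Quotient.mk_surjective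
  have hker : RingHom.ker π = I := Ideal.mk_ker
  have hkerm : RingHom.ker π ≤ m := by
    rw [hker, hI, Ideal.span_le, Set.singleton_subset_iff]; exact hphia_m
  haveI hmP : m.IsPrime := by
    rw [hmmax]; exact (IsLocalRing.maximalIdeal.isMaximal B).isPrime
  haveI hmbar : (m.map π).IsPrime := Ideal.map_isPrime_of_surjective hπsurj hkerm
  have hprimes : ∀ (J : Ideal Bq), J.IsPrime → J = m.map π := by
    intro J hJ
    have hJc : (J.comap π).IsPrime := hJ.comap π
    have haJ : φ a ∈ J.comap π := by
      have : π (φ a) = 0 := by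
        rw [hπ, Ideal.Quotient.eq_zero_iff_mem, hI]
        exact Ideal.mem_span_singleton_self _
      simp [Ideal.mem_comap, this]
    have : J.comap π = m := hunique _ hJc haJ
    rw [← Ideal.map_comap_of_surjective π hπsurj J, this]
  -- m̄ is nilpotent
  have hnil : IsNilpotent (m.map π) := by
    have h1 : nilradical Bq = m.map π := by
      rw [nilradical_eq_sInf]
      apply le_antisymm
      · exact sInf_le hmbar
      · apply le_sInf
        intro J hJ
        rw [hprimes J hJ]
    rw [← h1]
    exact IsNoetherianRing.isNilpotent_nilradical Bq
  obtain ⟨N, hN⟩ := hnil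
  -- Bq is Artinian
  haveI : IsArtinianRing Bq := by
    rcases subsingleton_or_nontrivial Bq with hsub | hnontriv
    · exact isArtinian_of_finite
    · have hmax : (m.map π).IsMaximal := by
        obtain ⟨𝔐, h𝔐⟩ := Ideal.exists_maximal Bq
        have := hprimes 𝔐 h𝔐.isPrime
        rwa [← this]
      exact my_isArtinianRing_of_pow_eq_bot _ hmax N (by
        rw [hN]; rfl)
  -- symbolic powers
  set Bl := Localization.AtPrime Q' with hBl
  set ψ := algebraMap B Bl with hψ
  haveI hNBl : IsNoetherianRing Bl :=
    IsLocalization.isNoetherianRing Q'.primeCompl Bl inferInstance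
  set syp : ℕ → Ideal B := fun n => ((Q'.map ψ) ^ n).comap ψ with hsyp
  have hsypanti : ∀ n, syp (n + 1) ≤ syp n := by
    intro n
    apply Ideal.comap_mono
    exact Ideal.pow_le_pow_right (by omega)
  -- the φ a is not in Q'
  have haQ' : φ a ∉ Q' := by
    intro h
    have : a ∈ Q'.comap φ := h
    rw [hcomapQ'] at this
    exact haq' this
  have hunit : IsUnit (ψ (φ a)) := IsLocalization.map_units Bl (⟨φ a, haQ'⟩ : Q'.primeCompl)
  -- stabilization via Artinian
  obtain ⟨Jk, ⟨k, hJk⟩, hmin⟩ := IsArtinian.set_has_minimal (R := Bq) (M := Bq)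
    (Set.range (fun n => (syp n).map π)) ⟨(syp 0).map π, 0, rfl⟩
  have hstab : (syp (k + 1)).map π = (syp k).map π := by
    have hle : (syp (k + 1)).map π ≤ (syp k).map π := Ideal.map_mono (hsypanti k)
    rcases lt_or_eq_of_le hle with hlt | heq
    · exact absurd (hJk ▸ hlt) (hmin _ ⟨k + 1, rfl⟩)
    · exact heq
  -- syp k = syp (k+1)
  have hsypeq : syp k = syp (k + 1) := by
    refine le_antisymm ?_ (hsypanti k)
    have hfg : (syp k).FG := IsNoetherian.noetherian _
    have hjac : I ≤ (⊥ : Ideal B).jacobson := by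
      rw [IsLocalRing.jacobson_eq_maximalIdeal (⊥ : Ideal B) bot_ne_top]
      rw [hI, Ideal.span_le, Set.singleton_subset_iff, ← hmmax]
      exact hphia_m
    apply Submodule.le_of_le_smul_of_le_jacobson_bot hfg hjac
    -- syp k ≤ syp (k+1) ⊔ I • syp k
    intro x hx
    have hxbar : π x ∈ (syp (k + 1)).map π := by
      rw [hstab]
      exact Ideal.mem_map_of_mem π hx
    obtain ⟨y, hy, hyx⟩ := (Ideal.mem_map_iff_of_surjective π hπsurj).mp hxbar
    have hxy : x - y ∈ I := by
      rw [← hker]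
      show π (x - y) = 0
      rw [map_sub, hyx, sub_self]
    rw [hI, Ideal.mem_span_singleton'] at hxy
    obtain ⟨z, hz⟩ := hxy
    have hzsyp : z ∈ syp k := by
      have hmem : z * φ a ∈ syp k := by
        rw [hz]
        exact Ideal.sub_mem _ hx (hsypanti k hy)
      rw [hsyp] at hmem ⊢
      simp only [Ideal.mem_comap] at hmem ⊢
      rw [_root_.map_mul] at hmem
      obtain ⟨u, hu⟩ := hunit
      rw [← hu] at hmem
      have := Ideal.mul_mem_right (↑u⁻¹) _ hmem
      rwa [mul_assoc, Units.mul_inv, mul_one] at this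
    have : x = y + φ a * z := by rw [mul_comm, hz]; ring
    rw [this]
    apply Submodule.add_mem_sup hy
    rw [Ideal.smul_eq_mul]
    exact Ideal.mul_mem_mul (Ideal.mem_span_singleton_self _) hzsyp
  -- push to Bl and Nakayama
  set M1 : Ideal Bl := Q'.map ψ with hM1
  have hM1pow : M1 ^ k = M1 ^ (k + 1) := by
    have h1 : Ideal.map ψ (syp k) = M1 ^ k :=
      IsLocalization.map_comap Q'.primeCompl Bl _
    have h2 : Ideal.map ψ (syp (k + 1)) = M1 ^ (k + 1) :=
      IsLocalization.map_comap Q'.primeCompl Bl _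
    rw [← h1, ← h2, hsypeq]
  have hM1max : M1 ≤ IsLocalRing.maximalIdeal Bl := by
    rw [hM1, Ideal.map_le_iff_le_comap]
    intro x hx
    rw [Ideal.mem_comap]
    exact (IsLocalization.AtPrime.to_map_mem_maximal_iff Bl Q' x).mpr hx
  have hM1k : M1 ^ k = ⊥ := by
    apply Submodule.eq_bot_of_le_smul_of_le_jacobson_bot M1 (M1 ^ k)
      (IsNoetherian.noetherian _)
    · rw [Ideal.smul_eq_mul, ← pow_succ']
      exact le_of_eq hM1pow
    · rw [IsLocalRing.jacobson_eq_maximalIdeal (⊥ : Ideal Bl) bot_ne_top]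
      exact hM1max
  -- contradiction via the prime Qq
  set Ql : Ideal Bl := Qq.map ψ with hQl
  haveI hQlp : Ql.IsPrime := by
    apply IsLocalization.isPrime_of_isPrime_disjoint Q'.primeCompl Bl Qq hQqp
    apply Set.disjoint_left.mpr
    intro x hx hxr
    exact hx (Ideal.map_mono h1.le hxr)
  have hM1Ql : M1 ≤ Ql := by
    intro x hx
    have : x ^ k ∈ M1 ^ k := Ideal.pow_mem_pow hx k
    rw [hM1k] at this
    have hx0 : x ^ k = 0 := by rwa [Ideal.mem_bot] at this
    exact hQlp.mem_of_pow_mem k (by rw [hx0]; exact Ql.zero_mem)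
  have hQ'Qq : Q' ≤ Qq := by
    have hcomapQl : Ql.comap ψ = Qq := by
      apply IsLocalization.comap_map_of_isPrime_disjoint Q'.primeCompl Bl hQqp
      apply Set.disjoint_left.mpr
      intro x hx hxr
      exact hx (Ideal.map_mono h1.le hxr)
    calc Q' ≤ M1.comap ψ := fun x hx => Ideal.mem_comap.mpr (Ideal.mem_map_of_mem ψ hx)
    _ ≤ Ql.comap ψ := Ideal.comap_mono hM1Ql
    _ = Qq := hcomapQl
  have : q' ≤ q := by
    calc q' = Q'.comap φ := hcomapQ'.symm
    _ ≤ Qq.comap φ := Ideal.comap_mono hQ'Qq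
    _ = q := hcomapQq
  exact absurd this (not_le_of_gt h1)

end PIT


section PolyLemmas

open Polynomial

variable {R : Type*} [CommRing R] [IsDomain R]

/-- Pseudo-division by a minimal-degree element of a prime lying over `0`. -/
lemma my_pseudo_div {P : Ideal R[X]} (hP : P.IsPrime)
    {h : R[X]} (hh : h ∈ P) (hh0 : h ≠ 0)
    (hmin : ∀ g ∈ P, g ≠ 0 → h.natDegree ≤ g.natDegree) :
    ∀ g ∈ P, ∃ (k : ℕ) (u : R[X]), C (h.leadingCoeff) ^ k * g = u * h := by
  have aux : ∀ (n : ℕ) (g : R[X]), g ∈ P → g.natDegree ≤ n →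
      ∃ (k : ℕ) (u : R[X]), C (h.leadingCoeff) ^ k * g = u * h := by
    intro n
    induction n with
    | zero =>
        intro g hg hdeg
        by_cases hg0 : g = 0
        · exact ⟨0, 0, by simp [hg0]⟩
        · -- natDegree g = 0, but h.natDegree ≤ 0, so h has degree 0 too
          have h1 : h.natDegree = 0 := le_antisymm ((hmin g hg hg0).trans hdeg) (Nat.zero_le _)
          -- g = u * h with u = g * h⁻¹? Instead: degree 0:
          -- C lc(h) = h  (h has degree 0)
          have hh' : h = C (h.coeff 0) := eq_C_of_natDegree_eq_zero h1
          have hlc : h.leadingCoeff = h.coeff 0 := by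
            rw [leadingCoeff, h1]
          refine ⟨1, C (g.coeff 0), ?_⟩
          have hg' : g = C (g.coeff 0) := eq_C_of_natDegree_eq_zero (le_antisymm hdeg (Nat.zero_le _))
          rw [pow_one, hlc, ← hh']
          conv_lhs => rw [hg']
          ring
    | succ n ih =>
        intro g hg hdeg
        by_cases hg0 : g = 0
        · exact ⟨0, 0, by simp [hg0]⟩
        by_cases hdeg' : g.natDegree ≤ n
        · exact ih g hg hdeg'
        have hgd : g.natDegree = n + 1 := le_antisymm hdeg (by omega)
        have hhg : h.natDegree ≤ g.natDegree := hmin g hg hg0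
        set δ := g.natDegree - h.natDegree with hδ
        set p := C h.leadingCoeff * g with hp
        set q := C g.leadingCoeff * (X ^ δ * h) with hq2
        have hlch : h.leadingCoeff ≠ 0 := leadingCoeff_ne_zero.mpr hh0
        have hlcg : g.leadingCoeff ≠ 0 := leadingCoeff_ne_zero.mpr hg0
        have hp0 : p ≠ 0 := mul_ne_zero (by simpa using hlch) hg0
        have hdp : p.degree = g.degree := by
          rw [hp, degree_C_mul (by exact hlch)]
        have hdq : q.degree = g.degree := by
          rw [hq2, degree_C_mul (by exact hlcg), degree_mul, degree_X_pow]
          rw [degree_eq_natDegree hh0, degree_eq_natDegree hg0]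
          rw [← Nat.cast_add]
          congr 1
          omega
        have hlcp : p.leadingCoeff = g.leadingCoeff * h.leadingCoeff := by
          rw [hp, leadingCoeff_mul, leadingCoeff_C]; ring
        have hlcq : q.leadingCoeff = g.leadingCoeff * h.leadingCoeff := by
          rw [hq2, leadingCoeff_mul, leadingCoeff_C, leadingCoeff_mul, leadingCoeff_X_pow]
          ring
        have hsub : (p - q).degree < g.degree := by
          rw [← hdp]
          exact degree_sub_lt (by rw [hdp, hdq]) hp0 (by rw [hlcp, hlcq])
        have hmem : p - q ∈ P := by
          apply Ideal.sub_mem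
          · exact Ideal.mul_mem_left _ _ hg
          · exact Ideal.mul_mem_left _ _ (Ideal.mul_mem_left _ _ hh)
        have hdeg2 : (p - q).natDegree ≤ n := by
          by_cases hz : p - q = 0
          · simp [hz]
          · have := natDegree_lt_natDegree hz hsub
            omega
        obtain ⟨k, u, hu⟩ := ih (p - q) hmem hdeg2
        refine ⟨k + 1, u + C h.leadingCoeff ^ k * C g.leadingCoeff * X ^ δ, ?_⟩
        have : C h.leadingCoeff ^ (k + 1) * g
            = C h.leadingCoeff ^ k * (p - q) + C h.leadingCoeff ^ k * q := by
          rw [hp]; ring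
        rw [this, hu, hq2]
        ring
  intro g hg
  exact aux g.natDegree g hg le_rfl

/-- Two comparable primes of `R[X]` lying over `0`, the smaller nonzero: then they agree. -/
lemma my_over_zero_comparable {P₁ P₂ : Ideal R[X]} (h1 : P₁.IsPrime) (h2 : P₂.IsPrime)
    (hle : P₁ ≤ P₂) (h0 : ∀ r : R, C r ∈ P₂ → r = 0) (hbot : P₁ ≠ ⊥) : P₂ ≤ P₁ := by
  -- pick minimal nonzero element of P₂
  have hne : ∃ n : ℕ, ∃ g ∈ P₂, g ≠ 0 ∧ g.natDegree = n := by
    obtain ⟨g, hg, hg0⟩ := Submodule.exists_mem_ne_zero_of_ne_bot hbot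
    exact ⟨g.natDegree, g, hle hg, hg0, rfl⟩
  classical
  obtain ⟨h₂, hh₂, hh₂0, hh₂deg⟩ := Nat.find_spec hne
  have hmin : ∀ g ∈ P₂, g ≠ 0 → h₂.natDegree ≤ g.natDegree := by
    intro g hg hg0
    rw [hh₂deg]
    exact Nat.find_le ⟨g, hg, hg0, rfl⟩
  have hC2 : C h₂.leadingCoeff ∉ P₁ := by
    intro hc
    exact leadingCoeff_ne_zero.mpr hh₂0 (h0 _ (hle hc))
  -- h₂ ∈ P₁
  have hh₂P₁ : h₂ ∈ P₁ := by
    -- pick minimal nonzero element h of P₁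
    have hne1 : ∃ n : ℕ, ∃ g ∈ P₁, g ≠ 0 ∧ g.natDegree = n := by
      obtain ⟨g, hg, hg0⟩ := Submodule.exists_mem_ne_zero_of_ne_bot hbot
      exact ⟨g.natDegree, g, hg, hg0, rfl⟩
    obtain ⟨h₁, hh₁, hh₁0, hh₁deg⟩ := Nat.find_spec hne1
    obtain ⟨k, u, hu⟩ := my_pseudo_div h2 hh₂ hh₂0 hmin h₁ (hle hh₁)
    have huP₁ : u * h₂ ∈ P₁ := by
      rw [← hu]
      exact Ideal.mul_mem_left _ _ hh₁
    rcases h1.mem_or_mem huP₁ with hu1 | hh21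
    · -- u ∈ P₁ : degree contradiction
      exfalso
      have hu0 : u ≠ 0 := by
        intro h
        rw [h, zero_mul] at hu
        have : C h₂.leadingCoeff ^ k * h₁ ≠ 0 :=
          mul_ne_zero (pow_ne_zero _ (by simpa using leadingCoeff_ne_zero.mpr hh₂0)) hh₁0
        exact this hu
      have hdeg : (C h₂.leadingCoeff ^ k * h₁).natDegree = h₁.natDegree := by
        rw [natDegree_mul (mul_ne_zero_iff.mp (hu ▸ mul_ne_zero hu0 hh₂0)).1 hh₁0]
        simp [natDegree_pow]
      have hdeg2 : (u * h₂).natDegree = u.natDegree + h₂.natDegree :=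
        natDegree_mul hu0 hh₂0
      have hμ : ∀ g ∈ P₁, g ≠ 0 → h₁.natDegree ≤ g.natDegree := by
        intro g hg hg0
        rw [hh₁deg]
        exact Nat.find_le ⟨g, hg, hg0, rfl⟩
      have h3 := hμ u hu1 hu0
      rw [hu, hdeg2] at hdeg
      have h4 : h₂.natDegree = 0 := by omega
      have h5 : h₂ = C (h₂.coeff 0) := eq_C_of_natDegree_eq_zero h4
      have h6 : h₂.coeff 0 = 0 := h0 _ (h5 ▸ hh₂)
      rw [h6, map_zero] at h5
      exact hh₂0 h5
    · exact hh21
  -- now every element of P₂ is in P₁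
  intro f hf
  obtain ⟨k, u, hu⟩ := my_pseudo_div h2 hh₂ hh₂0 hmin f hf
  have : C h₂.leadingCoeff ^ k * f ∈ P₁ := by
    rw [hu]; exact Ideal.mul_mem_left _ _ hh₂P₁
  rcases h1.mem_or_mem this with hc | hf1
  · exact absurd (h1.mem_of_pow_mem k hc) hC2
  · exact hf1

end PolyLemmas

section FieldCase

open Polynomial

/-- Over a field, a prime of `K[X]` avoiding `X` and all special monic polynomials
is the zero ideal. -/
lemma my_field_case {K : Type*} [Field K] {P : Ideal K[X]} (hP : P.IsPrime)
    (hX : Polynomial.X ∉ P)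
    (hS : ∀ f ∈ P, ¬(f.Monic ∧ f.coeff 0 = 1)) : P = ⊥ := by
  by_contra hbot
  classical
  have hne : ∃ n : ℕ, ∃ g ∈ P, g ≠ 0 ∧ g.natDegree = n := by
    obtain ⟨g, hg, hg0⟩ := Submodule.exists_mem_ne_zero_of_ne_bot hbot
    exact ⟨g.natDegree, g, hg, hg0, rfl⟩
  obtain ⟨h, hh, hh0, hhdeg⟩ := Nat.find_spec hne
  have hmin : ∀ g ∈ P, g ≠ 0 → h.natDegree ≤ g.natDegree := by
    intro g hg hg0
    rw [hhdeg]
    exact Nat.find_le ⟨g, hg, hg0, rfl⟩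
  set g := h * C h.leadingCoeff⁻¹ with hgdef
  have hgmonic : g.Monic := monic_mul_leadingCoeff_inv hh0
  have hgP : g ∈ P := Ideal.mul_mem_right _ _ hh
  have hg0 : g ≠ 0 := hgmonic.ne_zero
  have hgdeg : g.natDegree = h.natDegree := by
    rw [hgdef, natDegree_mul hh0 (by
      simp [inv_ne_zero (leadingCoeff_ne_zero.mpr hh0)]), natDegree_C, add_zero]
  have hgne1 : g ≠ 1 := by
    intro h1
    rw [h1] at hgP
    exact hP.ne_top (Ideal.eq_top_of_isUnit_mem _ hgP isUnit_one)
  have hgdegpos : 0 < g.natDegree := by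
    rcases Nat.eq_zero_or_pos g.natDegree with h0 | hpos
    · exact absurd (hgmonic.natDegree_eq_zero.mp h0) hgne1
    · exact hpos
  have hc : g.coeff 0 ≠ 0 := by
    intro hc0
    obtain ⟨g', hg'⟩ := X_dvd_iff.mpr hc0
    have hg'P : g' ∈ P := by
      rcases hP.mem_or_mem (hg' ▸ hgP) with hX' | h'
      · exact absurd hX' hX
      · exact h'
    have hg'0 : g' ≠ 0 := by
      intro h0
      rw [h0, mul_zero] at hg'
      exact hg0 hg'
    have : g.natDegree = g'.natDegree + 1 := by
      rw [hg', natDegree_mul X_ne_zero hg'0, natDegree_X]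
      omega
    have := hmin g' hg'P hg'0
    omega
  -- construct special monic polynomial
  set F := g * (X + C (g.coeff 0)⁻¹) with hF
  have hFP : F ∈ P := Ideal.mul_mem_right _ _ hgP
  apply hS F hFP
  constructor
  · exact hgmonic.mul (monic_X_add_C _)
  · rw [hF, mul_coeff_zero]
    simp [hc]

end FieldCase

section Lifting

open Polynomial

/-- Special monic polynomials lift along surjective ring maps. -/
lemma my_special_monic_lift {R S : Type*} [CommRing R] [CommRing S] [Nontrivial S]
    (φ : R →+* S) (hsurj : Function.Surjective φ) {f : S[X]}
    (hf : f.Monic) (hf0 : f.coeff 0 = 1) :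
    ∃ g : R[X], g.Monic ∧ g.coeff 0 = 1 ∧ g.map φ = f := by
  by_cases hdeg : f.natDegree = 0
  · refine ⟨1, monic_one, by simp, ?_⟩
    rw [hf.natDegree_eq_zero.mp hdeg]
    simp
  · have hlifts : f ∈ lifts φ := by
      rw [mem_lifts]
      obtain ⟨q, hq⟩ := (Polynomial.map_surjective φ hsurj) f
      exact ⟨q, hq⟩
    obtain ⟨g₀, hg₀map, hg₀deg, hg₀monic⟩ := lifts_and_degree_eq_and_monic hlifts hf
    refine ⟨g₀ + C (1 - g₀.coeff 0), ?_, ?_, ?_⟩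
    · apply hg₀monic.add_of_left
      apply lt_of_le_of_lt (degree_C_le)
      rw [hg₀deg]
      have : 0 < f.natDegree := Nat.pos_of_ne_zero hdeg
      rw [degree_eq_natDegree hf.ne_zero]
      exact_mod_cast this
    · simp
    · rw [Polynomial.map_add, hg₀map, map_C]
      have : φ (g₀.coeff 0) = 1 := by
        rw [← hf0, ← hg₀map, coeff_map]
      rw [map_sub, map_one, this]
      simp

end Lifting

section Helpers

open Polynomial

variable {R : Type*} [CommRing R]

/-- A polynomial all of whose coefficients (as constants) belong to an ideal
belongs to that ideal. -/
lemma my_poly_mem_of_coeff_mem {I : Ideal R[X]} {f : R[X]}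
    (h : ∀ n, C (f.coeff n) ∈ I) : f ∈ I := by
  have : f = f.sum fun n a => C a * X ^ n := (sum_C_mul_X_pow_eq f).symm
  rw [this, Polynomial.sum]
  apply Ideal.sum_mem
  intro n _
  exact Ideal.mul_mem_right _ _ (h n)

lemma my_mem_ker_mapRingHom {𝔭 : Ideal R} {f : R[X]} :
    f ∈ RingHom.ker (Polynomial.mapRingHom (Ideal.Quotient.mk 𝔭)) ↔
      ∀ n, f.coeff n ∈ 𝔭 := by
  rw [RingHom.mem_ker]
  constructor
  · intro h n
    have := congrArg (fun g => Polynomial.coeff g n) h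
    simp only [coe_mapRingHom, coeff_map, coeff_zero] at this
    rwa [← Ideal.Quotient.eq_zero_iff_mem]
  · intro h
    ext n
    simp only [coe_mapRingHom, coeff_map, coeff_zero]
    rw [Ideal.Quotient.eq_zero_iff_mem]
    exact h n

lemma my_map_lt_map {S : Type*} [CommRing S] (f : R →+* S) (hf : Function.Surjective f)
    {I J : Ideal R} (hkerI : RingHom.ker f ≤ I) (h : I < J) : I.map f < J.map f := by
  constructor
  · exact Ideal.map_mono h.le
  · intro hle
    have hIJ : J ≤ I := by
      intro x hx
      have : f x ∈ I.map f := hle (Ideal.mem_map_of_mem f hx)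
      obtain ⟨y, hy, hxy⟩ := (Ideal.mem_map_iff_of_surjective f hf).mp this
      have : x - y ∈ RingHom.ker f := by
        rw [RingHom.mem_ker, map_sub, hxy, sub_self]
      have hxmem : x = y + (x - y) := by ring
      rw [hxmem]
      exact I.add_mem hy (hkerI this)
    exact absurd hIJ (not_le_of_gt h)

lemma my_comap_strictmono {S : Type*} [CommRing S] (f : R →+* S)
    (hf : Function.Surjective f) :
    StrictMono (fun z : PrimeSpectrum S =>
      (⟨z.asIdeal.comap f, z.isPrime.comap f⟩ : PrimeSpectrum R)) := by
  apply Monotone.strictMono_of_injective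
  · intro a b hab
    exact Ideal.comap_mono hab
  · intro a b hab
    apply PrimeSpectrum.ext
    simp only [PrimeSpectrum.mk.injEq] at hab
    exact Ideal.comap_injective_of_surjective f hf hab

end Helpers

section MainInduction

open Polynomial

/-- The survival condition: a prime of `R[X]` avoiding `X` and special monic polynomials. -/
def SMGood {R : Type*} [CommRing R] (P : Ideal (Polynomial R)) : Prop :=
  Polynomial.X ∉ P ∧ ∀ f ∈ P, ¬(f.Monic ∧ f.coeff 0 = 1)

universe u

open scoped Classical in
theorem my_main (n : ℕ) : ∀ (R : Type u) (_ : CommRing R) (_ : IsDomain R)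
    (_ : IsNoetherianRing R)
    (p : LTSeries (PrimeSpectrum (Polynomial R))), p.length = n →
    (∀ i, SMGood ((p i).asIdeal)) →
    (∀ r : R, Polynomial.C r ∈ (p.head).asIdeal → r = 0) →
    ∃ q : LTSeries (PrimeSpectrum R),
      n + (if (p.head).asIdeal = ⊥ then 0 else 1) ≤ q.length := by
  induction n with
  | zero =>
      intro R _ _ _ p hlen hgood hover
      by_cases hbot : (p.head).asIdeal = ⊥
      · refine ⟨RelSeries.singleton _ ⟨⊥, Ideal.bot_prime⟩, ?_⟩
        simp [hbot]
      · rw [if_neg hbot]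
        by_cases hfield : IsField R
        · exfalso
          letI := hfield.toField
          exact hbot (my_field_case (p.head).isPrime (hgood 0).1
            (fun f hf hsm => (hgood 0).2 f hf hsm))
        · obtain ⟨𝔪, h𝔪0, h𝔪p⟩ := Ring.not_isField_iff_exists_prime.mp hfield
          refine ⟨(RelSeries.singleton _ ⟨𝔪, h𝔪p⟩).cons ⟨⊥, Ideal.bot_prime⟩ ?_, ?_⟩
          · show (_ : PrimeSpectrum R) < _
            rw [← PrimeSpectrum.asIdeal_lt_asIdeal]
            exact bot_lt_iff_ne_bot.mpr h𝔪0
          · simp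
  | succ n IH =>
      intro R _ _ _ p hlen hgood hover
      have hlen0 : p.length ≠ 0 := by omega
      have h01 : (0 : Fin (p.length + 1)) < 1 := by
        rw [Fin.lt_def]
        have h1 : ((1 : Fin (p.length + 1)) : ℕ) = 1 % (p.length + 1) := rfl
        rw [h1, Nat.mod_eq_of_lt (by omega)]
        simp
      have hstep01 : p.head < p 1 := p.strictMono h01
      by_cases hA : ∀ r : R, Polynomial.C r ∈ (p 1).asIdeal → r = 0
      · -- Case A : p 1 lies over 0
        have hheadbot : (p.head).asIdeal = ⊥ := by
          by_contra hne
          have := my_over_zero_comparable (p.head).isPrime (p 1).isPrime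
            hstep01.le hA hne
          exact absurd (lt_of_lt_of_le hstep01 this).false (by simp)
        rw [if_pos hheadbot]
        set t := p.tail hlen0 with ht
        have htlen : t.length = n := by
          rw [ht, RelSeries.tail_length, hlen]
          omega
        have htgood : ∀ i, SMGood ((t i).asIdeal) := fun i => hgood _
        have htover : ∀ r : R, Polynomial.C r ∈ (t.head).asIdeal → r = 0 := by
          rw [ht, RelSeries.head_tail]
          exact hA
        obtain ⟨q, hq⟩ := IH R ‹_› ‹_› ‹_› t htlen htgood htover
        have hthead : (t.head).asIdeal ≠ ⊥ := by
          rw [ht, RelSeries.head_tail]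
          intro hb
          have hlt : (RelSeries.head p).asIdeal < (p 1).asIdeal := hstep01
          rw [hheadbot, hb] at hlt
          exact hlt.false
        rw [if_neg hthead] at hq
        exact ⟨q, by omega⟩
      · -- Case B : p 1 lies over a nonzero prime 𝔭
        push_neg at hA
        obtain ⟨r, hrmem, hrne⟩ := hA
        set 𝔭 : Ideal R := (p 1).asIdeal.comap Polynomial.C with h𝔭
        haveI h𝔭p : 𝔭.IsPrime := (p 1).isPrime.comap _
        have hr𝔭 : r ∈ 𝔭 := hrmem
        have h𝔭ne : 𝔭 ≠ ⊥ := fun hb => hrne (by rwa [hb, Ideal.mem_bot] at hr𝔭)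
        set ρ : Polynomial R →+* Polynomial (R ⧸ 𝔭) :=
          Polynomial.mapRingHom (Ideal.Quotient.mk 𝔭) with hρ
        have hρsurj : Function.Surjective ρ :=
          Polynomial.map_surjective _ Ideal.Quotient.mk_surjective
        have hker1 : RingHom.ker ρ ≤ (p 1).asIdeal := by
          intro f hf
          rw [hρ, my_mem_ker_mapRingHom] at hf
          exact my_poly_mem_of_coeff_mem (fun m => hf m)
        set t := p.tail hlen0 with ht
        have htlen : t.length = n := by rw [ht, RelSeries.tail_length, hlen]; omega
        have hthead : t.head = p 1 := RelSeries.head_tail _ _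
        have hker : ∀ i, RingHom.ker ρ ≤ (t i).asIdeal := by
          intro i
          refine le_trans hker1 ?_
          have : t.head ≤ t i := LTSeries.monotone t (Fin.zero_le i)
          rw [hthead] at this
          exact this
        -- map the tail through ρ
        set q' : LTSeries (PrimeSpectrum (Polynomial (R ⧸ 𝔭))) :=
          LTSeries.mk t.length
            (fun i => ⟨((t i).asIdeal).map ρ,
              Ideal.map_isPrime_of_surjective hρsurj (hker i)⟩)
            (fun i j hij => by
              rw [← PrimeSpectrum.asIdeal_lt_asIdeal]
              exact my_map_lt_map ρ hρsurj (hker i) (LTSeries.strictMono t hij)) with hq'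
        have hq'at : ∀ i, (q' i).asIdeal = ((t i).asIdeal).map ρ := fun i => rfl
        have hcomapmap : ∀ i, (((t i).asIdeal).map ρ).comap ρ = (t i).asIdeal := by
          intro i
          rw [Ideal.comap_map_of_surjective ρ hρsurj]
          exact sup_eq_left.mpr (hker i)
        have hq'good : ∀ i, SMGood ((q' i).asIdeal) := by
          intro i
          constructor
          · intro hX
            have : Polynomial.X ∈ ((t i).asIdeal).map ρ := by
              have hXmap : ρ Polynomial.X = Polynomial.X := by
                simp [hρ]
              rw [← hXmap] at hX ⊢
              exact hX
            have hXc : Polynomial.X ∈ (((t i).asIdeal).map ρ).comap ρ := by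
              rw [Ideal.mem_comap]
              simpa [hρ] using this
            rw [hcomapmap i] at hXc
            exact (hgood _).1 hXc
          · rintro f hf ⟨hfm, hf0⟩
            obtain ⟨g, hgm, hg0, hgmap⟩ := my_special_monic_lift
              (Ideal.Quotient.mk 𝔭) Ideal.Quotient.mk_surjective hfm hf0
            have : g ∈ (((t i).asIdeal).map ρ).comap ρ := by
              rw [Ideal.mem_comap]
              show Polynomial.map (Ideal.Quotient.mk 𝔭) g ∈ _
              rw [hgmap]
              exact hf
            rw [hcomapmap i] at this
            exact (hgood _).2 g this ⟨hgm, hg0⟩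
        have hq'over : ∀ s : R ⧸ 𝔭, Polynomial.C s ∈ (q'.head).asIdeal → s = 0 := by
          intro s hs
          obtain ⟨a, rfl⟩ := Ideal.Quotient.mk_surjective s
          have hhead : q'.head = q' 0 := rfl
          have h0cast : (q' 0).asIdeal = ((t 0).asIdeal).map ρ := rfl
          rw [hhead, h0cast] at hs
          have : Polynomial.C a ∈ (((t 0).asIdeal).map ρ).comap ρ := by
            rw [Ideal.mem_comap]
            simpa [hρ] using hs
          rw [hcomapmap 0] at this
          have ht0 : t 0 = p 1 := hthead
          rw [ht0] at this
          rw [Ideal.Quotient.eq_zero_iff_mem]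
          exact this
        obtain ⟨w, hw⟩ := IH (R ⧸ 𝔭) inferInstance inferInstance inferInstance q'
          (by rw [hq']; exact htlen) hq'good hq'over
        -- map w back into Spec R
        set w' : LTSeries (PrimeSpectrum R) :=
          w.map (fun z => ⟨z.asIdeal.comap (Ideal.Quotient.mk 𝔭),
              z.isPrime.comap _⟩)
            (my_comap_strictmono _ Ideal.Quotient.mk_surjective) with hw'
        have hw'len : w'.length = w.length := rfl
        have hw'head : 𝔭 ≤ (w'.head).asIdeal := by
          have : w'.head = (⟨(w.head).asIdeal.comap (Ideal.Quotient.mk 𝔭),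
              (w.head).isPrime.comap _⟩ : PrimeSpectrum R) := LTSeries.head_map _ _ _
          rw [this]
          intro x hx
          rw [Ideal.mem_comap, Ideal.Quotient.eq_zero_iff_mem.mpr hx]
          exact Ideal.zero_mem _
        have hbotw' : (⊥ : Ideal R) < (w'.head).asIdeal :=
          lt_of_lt_of_le (bot_lt_iff_ne_bot.mpr h𝔭ne) hw'head
        by_cases hP0 : (p.head).asIdeal = ⊥
        · -- B1
          rw [if_pos hP0]
          refine ⟨w'.cons ⟨⊥, Ideal.bot_prime⟩ ?_, ?_⟩
          · show (_ : PrimeSpectrum R) < _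
            rw [← PrimeSpectrum.asIdeal_lt_asIdeal]
            exact hbotw'
          · simp only [RelSeries.cons_length]
            omega
        · rw [if_neg hP0]
          by_cases hq'bot : (q'.head).asIdeal = ⊥
          · -- B2b : p 1 equals the kernel of ρ; use the principal ideal theorem
            have hp1ker : (p 1).asIdeal = RingHom.ker ρ := by
              have hhead : (q'.head).asIdeal = ((t 0).asIdeal).map ρ := rfl
              rw [hhead] at hq'bot
              have ht0 : t 0 = p 1 := hthead
              rw [ht0] at hq'bot
              apply le_antisymm _ hker1
              intro f hf
              have : ρ f ∈ ((p 1).asIdeal).map ρ := Ideal.mem_map_of_mem ρ hf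
              rw [hq'bot] at this
              rwa [Ideal.mem_bot, ← RingHom.mem_ker] at this
            -- there is a prime strictly between ⊥ and 𝔭
            have hexmid : ∃ 𝔯 : Ideal R, 𝔯.IsPrime ∧ ⊥ < 𝔯 ∧ 𝔯 < 𝔭 := by
              by_contra hno
              push_neg at hno
              have h𝔭min : 𝔭 ∈ (Ideal.span {r}).minimalPrimes := by
                constructor
                · exact ⟨h𝔭p, by rwa [Ideal.span_le, Set.singleton_subset_iff]⟩
                · rintro y ⟨hyp, hyr⟩ hle
                  rcases lt_or_eq_of_le hle with hlt | heq
                  · exfalso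
                    have hy0 : (⊥ : Ideal R) < y := by
                      rw [bot_lt_iff_ne_bot]
                      intro hb
                      rw [hb] at hyr
                      have : r ∈ (⊥ : Ideal R) :=
                        hyr (Ideal.mem_span_singleton_self r)
                      exact hrne (by rwa [Ideal.mem_bot] at this)
                    exact absurd hlt (hno y hyp hy0)
                  · rw [heq]
              have hKmin : RingHom.ker ρ ∈ (Ideal.span {Polynomial.C r}).minimalPrimes := by
                constructor
                · refine ⟨?_, ?_⟩
                  · rw [← hp1ker]; exact (p 1).isPrime
                  · rw [Ideal.span_le, Set.singleton_subset_iff]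
                    rw [SetLike.mem_coe, hρ, my_mem_ker_mapRingHom]
                    intro m
                    by_cases hm : m = 0
                    · simpa [hm] using hr𝔭
                    · simp [Polynomial.coeff_C, hm]
                · rintro Θ ⟨hΘp, hΘr⟩ hle
                  have h𝔯' : (Θ.comap Polynomial.C).IsPrime := hΘp.comap _
                  have hr𝔯' : r ∈ Θ.comap Polynomial.C := by
                    rw [Ideal.mem_comap]
                    exact hΘr (Ideal.mem_span_singleton_self _)
                  have h𝔯'le : Θ.comap Polynomial.C ≤ 𝔭 := by
                    intro s hs
                    rw [Ideal.mem_comap] at hs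
                    have := hle hs
                    rw [hρ, my_mem_ker_mapRingHom] at this
                    simpa using this 0
                  have h𝔯'eq : 𝔭 ≤ Θ.comap Polynomial.C :=
                    h𝔭min.2 ⟨h𝔯', by rwa [Ideal.span_le, Set.singleton_subset_iff]⟩ h𝔯'le
                  intro f hf
                  rw [hρ, my_mem_ker_mapRingHom] at hf
                  apply my_poly_mem_of_coeff_mem
                  intro m
                  have : f.coeff m ∈ Θ.comap Polynomial.C := h𝔯'eq (hf m)
                  rwa [Ideal.mem_comap] at this
              -- chain ⊥ < p.head < ker ρ contradicts PIT
              haveI : IsNoetherianRing (Polynomial R) := Polynomial.isNoetherianRing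
              apply my_pit hKmin Ideal.bot_prime (p.head).isPrime
                (bot_lt_iff_ne_bot.mpr hP0)
              rw [← hp1ker]
              exact hstep01
            obtain ⟨𝔯, h𝔯p, h𝔯0, h𝔯𝔭⟩ := hexmid
            refine ⟨(w'.cons ⟨𝔯, h𝔯p⟩ ?_).cons ⟨⊥, Ideal.bot_prime⟩ ?_, ?_⟩
            · show (_ : PrimeSpectrum R) < _
              rw [← PrimeSpectrum.asIdeal_lt_asIdeal]
              exact lt_of_lt_of_le h𝔯𝔭 hw'head
            · rw [RelSeries.head_cons]
              show (_ : PrimeSpectrum R) < _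
              rw [← PrimeSpectrum.asIdeal_lt_asIdeal]
              exact h𝔯0
            · simp only [RelSeries.cons_length]
              omega
          · -- B2a
            rw [if_neg hq'bot] at hw
            refine ⟨w'.cons ⟨⊥, Ideal.bot_prime⟩ ?_, ?_⟩
            · show (_ : PrimeSpectrum R) < _
              rw [← PrimeSpectrum.asIdeal_lt_asIdeal]
              exact hbotw'
            · simp only [RelSeries.cons_length]
              omega

end MainInduction

section Final

open Polynomial

/-- The multiplicative set of special monic polynomials (monic with constant
coefficient `1`) in `R[T]`. -/
def specialMonicSubmonoid (R : Type*) [CommRing R] [Nontrivial R] :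
    Submonoid (Polynomial R) where
  carrier := {f | f.Monic ∧ f.coeff 0 = 1}
  one_mem' := ⟨Polynomial.monic_one, by simp⟩
  mul_mem' := fun hf hg => ⟨hf.1.mul hg.1, by
    rw [Polynomial.mul_coeff_zero, hf.2, hg.2, one_mul]⟩

/-- If `𝒜` is obtained from `R[T,T⁻¹]` by inverting all special monic
polynomials, then `dim 𝒜 ≤ dim R`. -/
theorem krullDim_localization_special_monic_le
    (R : Type*) [CommRing R] [Nontrivial R] [IsNoetherianRing R] :
    ringKrullDim (Localization ((specialMonicSubmonoid R).map
      (Polynomial.toLaurent (R := R)).toMonoidHom)) ≤ ringKrullDim R := by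
  classical
  set L := LaurentPolynomial R with hL
  set M' : Submonoid L := (specialMonicSubmonoid R).map
      (Polynomial.toLaurent (R := R)).toMonoidHom with hM'
  set 𝒜 := Localization M' with h𝒜
  haveI hloc : IsLocalization M' 𝒜 := Localization.isLocalization
  haveI hlocL : IsLocalization (Submonoid.powers (Polynomial.X : Polynomial R)) L :=
    LaurentPolynomial.isLocalization
  rw [ringKrullDim, ringKrullDim, Order.krullDim]
  apply iSup_le
  intro q
  set n := q.length with hn
  -- step 1 : map into Spec R[X]
  have F1 : StrictMono (fun z : PrimeSpectrum 𝒜 =>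
      (⟨z.asIdeal.comap (algebraMap L 𝒜), z.isPrime.comap _⟩ : PrimeSpectrum L)) := by
    intro z₁ z₂ hz
    have := (IsLocalization.orderIsoOfPrime M' 𝒜).lt_iff_lt.mpr
      (show (⟨z₁.asIdeal, z₁.isPrime⟩ : {p : Ideal 𝒜 // p.IsPrime}) <
        ⟨z₂.asIdeal, z₂.isPrime⟩ from hz)
    exact this
  have F2 : StrictMono (fun z : PrimeSpectrum L =>
      (⟨z.asIdeal.comap (Polynomial.toLaurent (R := R)),
        z.isPrime.comap _⟩ : PrimeSpectrum (Polynomial R))) := by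
    intro z₁ z₂ hz
    have := (IsLocalization.orderIsoOfPrime
        (Submonoid.powers (Polynomial.X : Polynomial R)) L).lt_iff_lt.mpr
      (show (⟨z₁.asIdeal, z₁.isPrime⟩ : {p : Ideal L // p.IsPrime}) <
        ⟨z₂.asIdeal, z₂.isPrime⟩ from hz)
    exact this
  set J : LTSeries (PrimeSpectrum (Polynomial R)) :=
    (q.map _ F1).map _ F2 with hJ
  have hJlen : J.length = n := rfl
  have hJgood : ∀ i, SMGood ((J i).asIdeal) := by
    intro i
    set z : PrimeSpectrum 𝒜 := q i with hz
    have hJi : (J i).asIdeal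
        = (z.asIdeal.comap (algebraMap L 𝒜)).comap (Polynomial.toLaurent (R := R)) := rfl
    have hdisj : Disjoint (M' : Set L) ((z.asIdeal.comap (algebraMap L 𝒜)) : Set L) :=
      ((IsLocalization.isPrime_iff_isPrime_disjoint M' 𝒜 _).mp z.isPrime).2
    constructor
    · intro hX
      rw [hJi, Ideal.mem_comap] at hX
      have hunit : IsUnit (Polynomial.toLaurent (R := R) Polynomial.X) := by
        rw [Polynomial.toLaurent_X]
        exact LaurentPolynomial.isUnit_T 1
      exact (z.isPrime.comap (algebraMap L 𝒜)).ne_top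
        (Ideal.eq_top_of_isUnit_mem _ hX hunit)
    · rintro f hf ⟨hfm, hf0⟩
      rw [hJi, Ideal.mem_comap] at hf
      have hfM' : (Polynomial.toLaurent (R := R)) f ∈ (M' : Set L) := by
        rw [hM']
        exact ⟨f, ⟨hfm, hf0⟩, rfl⟩
      exact Set.disjoint_left.mp hdisj hfM' hf
  -- step 2 : quotient by the contraction of the head
  set 𝔭 : Ideal R := (J.head).asIdeal.comap Polynomial.C with h𝔭
  haveI h𝔭p : 𝔭.IsPrime := (J.head).isPrime.comap _
  set ρ : Polynomial R →+* Polynomial (R ⧸ 𝔭) :=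
    Polynomial.mapRingHom (Ideal.Quotient.mk 𝔭) with hρ
  have hρsurj : Function.Surjective ρ :=
    Polynomial.map_surjective _ Ideal.Quotient.mk_surjective
  have hker1 : RingHom.ker ρ ≤ (J.head).asIdeal := by
    intro f hf
    rw [hρ, my_mem_ker_mapRingHom] at hf
    exact my_poly_mem_of_coeff_mem (fun m => hf m)
  have hker : ∀ i, RingHom.ker ρ ≤ (J i).asIdeal := by
    intro i
    refine le_trans hker1 ?_
    exact LTSeries.monotone J (Fin.zero_le i)
  set p' : LTSeries (PrimeSpectrum (Polynomial (R ⧸ 𝔭))) :=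
    LTSeries.mk J.length
      (fun i => ⟨((J i).asIdeal).map ρ,
        Ideal.map_isPrime_of_surjective hρsurj (hker i)⟩)
      (fun i j hij => by
        rw [← PrimeSpectrum.asIdeal_lt_asIdeal]
        exact my_map_lt_map ρ hρsurj (hker i) (LTSeries.strictMono J hij)) with hp'
  have hcomapmap : ∀ i, (((J i).asIdeal).map ρ).comap ρ = (J i).asIdeal := by
    intro i
    rw [Ideal.comap_map_of_surjective ρ hρsurj]
    exact sup_eq_left.mpr (hker i)
  have hp'good : ∀ i, SMGood ((p' i).asIdeal) := by
    intro i
    constructor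
    · intro hX
      have hXc : Polynomial.X ∈ (((J i).asIdeal).map ρ).comap ρ := by
        rw [Ideal.mem_comap]
        have hX' : Polynomial.X ∈ ((J i).asIdeal).map ρ := hX
        simpa [hρ] using hX'
      rw [hcomapmap i] at hXc
      exact (hJgood _).1 hXc
    · rintro f hf ⟨hfm, hf0⟩
      obtain ⟨g, hgm, hg0, hgmap⟩ := my_special_monic_lift
        (Ideal.Quotient.mk 𝔭) Ideal.Quotient.mk_surjective hfm hf0
      have : g ∈ (((J i).asIdeal).map ρ).comap ρ := by
        rw [Ideal.mem_comap]
        show Polynomial.map (Ideal.Quotient.mk 𝔭) g ∈ _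
        rw [hgmap]
        exact hf
      rw [hcomapmap i] at this
      exact (hJgood _).2 g this ⟨hgm, hg0⟩
  have hp'over : ∀ s : R ⧸ 𝔭, Polynomial.C s ∈ (p'.head).asIdeal → s = 0 := by
    intro s hs
    obtain ⟨a, rfl⟩ := Ideal.Quotient.mk_surjective s
    have h0cast : (p'.head).asIdeal = ((J 0).asIdeal).map ρ := rfl
    rw [h0cast] at hs
    have : Polynomial.C a ∈ (((J 0).asIdeal).map ρ).comap ρ := by
      rw [Ideal.mem_comap]
      simpa [hρ] using hs
    rw [hcomapmap 0] at this
    rw [Ideal.Quotient.eq_zero_iff_mem]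
    exact this
  obtain ⟨w, hw⟩ := my_main n (R ⧸ 𝔭) inferInstance inferInstance inferInstance p'
    (by rw [hp']; exact hJlen) hp'good hp'over
  have hwn : n ≤ w.length := by
    by_cases hb : (p'.head).asIdeal = ⊥
    · rw [if_pos hb] at hw; omega
    · rw [if_neg hb] at hw; omega
  set w' : LTSeries (PrimeSpectrum R) :=
    w.map (fun z => ⟨z.asIdeal.comap (Ideal.Quotient.mk 𝔭), z.isPrime.comap _⟩)
      (my_comap_strictmono _ Ideal.Quotient.mk_surjective) with hw'
  have hw'len : w'.length = w.length := rfl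
  calc ((q.length : ℕ∞) : WithBot ℕ∞) ≤ ((w'.length : ℕ∞) : WithBot ℕ∞) := by
        rw [hw'len]
        exact_mod_cast hwn
  _ ≤ Order.krullDim (PrimeSpectrum R) := Order.LTSeries.length_le_krullDim w'

end Final
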